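/- arXiv:0903.3685 — 2 statements merged into one kernel-verified Lean document; each statement's English description precedes it below -/
import Mathlib

section
/- There exist two K₂-quasiperfect dominating sets S and S' of the triangular lattice Δ, each of which possesses three components that are pairwise at graph distance exactly 3 and whose types are 1, 2 and 3 in some order, such that no graph automorphism of Δ maps S onto S'. (Up to symmetry there are at least two K₂-QPDSs in Δ with three pairwise adjacent components of the three different types.) -/
open SimpleGraph Set

def triDirs : Set (ℤ × ℤ) := {(1,0), (-1,0), (0,1), (0,-1), (1,-1), (-1,1)}

def triLattice : SimpleGraph (ℤ × ℤ) :=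
  SimpleGraph.fromRel (fun u v => u - v ∈ triDirs)

def torLattice (m n : ℕ) : SimpleGraph (ZMod m × ZMod n) :=
  SimpleGraph.fromRel (fun u v =>
    ∃ d ∈ triDirs, u - v = ((d.1 : ZMod m), (d.2 : ZMod n)))

def IsPDS {V : Type*} (G : SimpleGraph V) (S : Set V) : Prop :=
  ∀ v ∉ S, ∃! u, u ∈ S ∧ G.Adj v u

def IsSPDS {V : Type*} (G : SimpleGraph V) (S : Set V) : Prop :=
  ∀ v ∉ S, {u | u ∈ S ∧ G.Adj v u}.ncard = 2

def IsQPDS {V : Type*} (G : SimpleGraph V) (S : Set V) : Prop :=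
  ∀ v ∉ S, {u | u ∈ S ∧ G.Adj v u}.ncard = 1 ∨ {u | u ∈ S ∧ G.Adj v u}.ncard = 2

def IsK2QPDS {V : Type*} (G : SimpleGraph V) (S : Set V) : Prop :=
  IsQPDS G S ∧ ∀ v ∈ S, {u | u ∈ S ∧ G.Adj v u}.ncard = 1

def IsK3QPDS {V : Type*} (G : SimpleGraph V) (S : Set V) : Prop :=
  IsQPDS G S ∧ ∀ v ∈ S, ∃ a b, a ≠ b ∧ G.Adj a b ∧ {u | u ∈ S ∧ G.Adj v u} = {a, b}

def IsIndep {V : Type*} (G : SimpleGraph V) (S : Set V) : Prop :=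
  ∀ a ∈ S, ∀ b ∈ S, ¬ G.Adj a b

def DF : Finset (ℤ × ℤ) := {(1,0), (-1,0), (0,1), (0,-1), (1,-1), (-1,1)}

lemma mem_DF_iff {d : ℤ × ℤ} : d ∈ DF ↔ d ∈ triDirs := by
  simp [DF, triDirs]

lemma adj_iff {v u : ℤ × ℤ} : triLattice.Adj v u ↔ u - v ∈ DF := by
  rw [triLattice, SimpleGraph.fromRel_adj, mem_DF_iff]
  constructor
  · rintro ⟨hne, h | h⟩
    · have he : u - v = -(v - u) := by ring
      rw [he]
      simp only [triDirs, Set.mem_insert_iff, Set.mem_singleton_iff] at h ⊢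
      rcases h with h|h|h|h|h|h <;> rw [h] <;> decide
    · exact h
  · intro h
    refine ⟨?_, Or.inr h⟩
    intro he; subst he
    simp only [sub_self] at h
    simp [triDirs, Prod.ext_iff] at h
lemma adj_add {a d : ℤ × ℤ} (hd : d ∈ DF) : triLattice.Adj a (a + d) := by
  rw [adj_iff]; simpa using hd

def tnorm (p : ℤ × ℤ) : ℕ := max (max p.1.natAbs p.2.natAbs) (p.1 + p.2).natAbs

lemma fst_le_tnorm (p : ℤ × ℤ) : p.1.natAbs ≤ tnorm p :=
  (le_max_left _ _).trans (le_max_left _ _)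

lemma snd_le_tnorm (p : ℤ × ℤ) : p.2.natAbs ≤ tnorm p :=
  (le_max_right _ _).trans (le_max_left _ _)

lemma sum_le_tnorm (p : ℤ × ℤ) : (p.1 + p.2).natAbs ≤ tnorm p := le_max_right _ _

lemma tnorm_add_le (p q : ℤ × ℤ) : tnorm (p + q) ≤ tnorm p + tnorm q := by
  refine max_le (max_le ?_ ?_) ?_
  · exact (Int.natAbs_add_le _ _).trans (add_le_add (fst_le_tnorm p) (fst_le_tnorm q))
  · exact (Int.natAbs_add_le _ _).trans (add_le_add (snd_le_tnorm p) (snd_le_tnorm q))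
  · have h : (p + q).1 + (p + q).2 = (p.1 + p.2) + (q.1 + q.2) := by
      simp [Prod.fst_add, Prod.snd_add]; ring
    rw [h]
    exact (Int.natAbs_add_le _ _).trans (add_le_add (sum_le_tnorm p) (sum_le_tnorm q))

lemma tnorm_le_walk_length {a b : ℤ × ℤ} (p : triLattice.Walk a b) :
    tnorm (b - a) ≤ p.length := by
  induction p with
  | nil => simp [tnorm]
  | @cons a c b h q ih =>
      have h1 : tnorm (c - a) ≤ 1 := by
        rw [adj_iff] at h
        simp only [DF, Finset.mem_insert, Finset.mem_singleton] at h
        rcases h with h|h|h|h|h|h <;> rw [h] <;> decide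
      have h2 : b - a = (c - a) + (b - c) := by ring
      rw [h2, SimpleGraph.Walk.length_cons]
      have := tnorm_add_le (c - a) (b - c)
      omega

lemma reach_add (a p : ℤ × ℤ) : triLattice.Reachable a (a + p) := by
  obtain ⟨x, y⟩ := p
  have hx : ∀ (x : ℤ) (a : ℤ × ℤ), triLattice.Reachable a (a + (x, 0)) := by
    intro x
    induction x using Int.induction_on with
    | zero => intro a; convert SimpleGraph.Reachable.refl a using 1; simp [Prod.ext_iff]
    | succ k ih =>
        intro a
        refine (ih a).trans (SimpleGraph.Adj.reachable ?_)
        have he : a + ((k : ℤ) + 1, 0) = (a + ((k : ℤ), 0)) + (1, 0) := by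
          simp [Prod.ext_iff]; ring
        rw [he]
        exact adj_add (by decide)
    | pred k ih =>
        intro a
        refine (ih a).trans (SimpleGraph.Adj.reachable ?_)
        have he : a + (-(k : ℤ) - 1, 0) = (a + (-(k : ℤ), 0)) + (-1, 0) := by
          simp [Prod.ext_iff]; ring
        rw [he]
        exact adj_add (by decide)
  have hy : ∀ (y : ℤ) (a : ℤ × ℤ), triLattice.Reachable a (a + (0, y)) := by
    intro y
    induction y using Int.induction_on with
    | zero => intro a; convert SimpleGraph.Reachable.refl a using 1; simp [Prod.ext_iff]
    | succ k ih =>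
        intro a
        refine (ih a).trans (SimpleGraph.Adj.reachable ?_)
        have he : a + (0, (k : ℤ) + 1) = (a + (0, (k : ℤ))) + (0, 1) := by
          simp [Prod.ext_iff]; ring
        rw [he]
        exact adj_add (by decide)
    | pred k ih =>
        intro a
        refine (ih a).trans (SimpleGraph.Adj.reachable ?_)
        have he : a + (0, -(k : ℤ) - 1) = (a + (0, -(k : ℤ))) + (0, -1) := by
          simp [Prod.ext_iff]; ring
        rw [he]
        exact adj_add (by decide)
  have he : a + (x, y) = (a + (x, 0)) + (0, y) := by simp [Prod.ext_iff]
  rw [he]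
  exact (hx x a).trans (hy y _)

lemma tri_reachable (a b : ℤ × ℤ) : triLattice.Reachable a b := by
  have he : b = a + (b - a) := by ring
  rw [he]; exact reach_add a _

lemma three_le_dist {a b : ℤ × ℤ} (h : 3 ≤ tnorm (b - a)) : 3 ≤ triLattice.dist a b := by
  obtain ⟨p, hp⟩ := (tri_reachable a b).exists_walk_length_eq_dist
  rw [← hp]
  exact h.trans (tnorm_le_walk_length p)

lemma dist_le_three {a b : ℤ × ℤ} (d1 d2 d3 : ℤ × ℤ) (h1 : d1 ∈ DF) (h2 : d2 ∈ DF)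
    (h3 : d3 ∈ DF) (he : a + d1 + d2 + d3 = b) : triLattice.dist a b ≤ 3 := by
  subst he
  refine le_trans (SimpleGraph.dist_le
    (.cons (adj_add h1) (.cons (adj_add h2) (.cons (adj_add h3) .nil)))) ?_
  simp

lemma dist_eq_three {a b : ℤ × ℤ} (d1 d2 d3 : ℤ × ℤ) (h1 : d1 ∈ DF) (h2 : d2 ∈ DF)
    (h3 : d3 ∈ DF) (he : a + d1 + d2 + d3 = b) (hn : 3 ≤ tnorm (b - a)) :
    triLattice.dist a b = 3 :=
  le_antisymm (dist_le_three d1 d2 d3 h1 h2 h3 he) (three_le_dist hn)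

section pattern
variable {m n : ℕ}

def pmap (m n : ℕ) (v : ℤ × ℤ) : ZMod m × ZMod n := ((v.1 : ZMod m), (v.2 : ZMod n))

def pset (F : Finset (ZMod m × ZMod n)) : Set (ℤ × ℤ) := {v | pmap m n v ∈ F}

instance (F : Finset (ZMod m × ZMod n)) : DecidablePred (· ∈ pset F) :=
  fun v => inferInstanceAs (Decidable (pmap m n v ∈ F))

def pcount (F : Finset (ZMod m × ZMod n)) (r : ZMod m × ZMod n) : ℕ :=
  (DF.filter (fun d => r + pmap m n d ∈ F)).card

lemma pmap_add (u v : ℤ × ℤ) : pmap m n (u + v) = pmap m n u + pmap m n v := by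
  simp [pmap, Prod.ext_iff]

lemma ncard_eq (F : Finset (ZMod m × ZMod n)) (v : ℤ × ℤ) :
    {u | u ∈ pset F ∧ triLattice.Adj v u}.ncard = pcount F (pmap m n v) := by
  have hset : {u | u ∈ pset F ∧ triLattice.Adj v u}
      = ↑((DF.filter (fun d => v + d ∈ pset F)).image (fun d => v + d)) := by
    ext u
    simp only [Set.mem_setOf_eq, Finset.coe_image, Set.mem_image, Finset.mem_coe,
      Finset.mem_filter]
    constructor
    · rintro ⟨hu, hadj⟩
      exact ⟨u - v, ⟨adj_iff.mp hadj, by simpa⟩, by ring⟩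
    · rintro ⟨d, ⟨hd, hds⟩, rfl⟩
      exact ⟨hds, adj_add hd⟩
  rw [hset, Set.ncard_coe_finset, Finset.card_image_of_injective _ (add_right_injective v)]
  unfold pcount
  congr 1
  apply Finset.filter_congr
  intro d _
  show v + d ∈ pset F ↔ _
  rw [show ((v + d) ∈ pset F) ↔ pmap m n (v + d) ∈ F from Iff.rfl, pmap_add]

lemma pset_K2QPDS (F : Finset (ZMod m × ZMod n))
    (h : ∀ r : ZMod m × ZMod n,
      (r ∈ F → pcount F r = 1) ∧ (r ∉ F → pcount F r = 1 ∨ pcount F r = 2)) :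
    IsK2QPDS triLattice (pset F) := by
  constructor
  · intro v hv
    rw [ncard_eq]
    exact (h _).2 hv
  · intro v hv
    rw [ncard_eq]
    exact (h _).1 hv

end pattern

/-- `P` is a component of the `K₂`-QPDS `S`: an adjacent pair of vertices of `S`. -/
def IsComp (S P : Set (ℤ × ℤ)) : Prop :=
  ∃ a b, a ∈ S ∧ b ∈ S ∧ triLattice.Adj a b ∧ P = {a, b}

/-- The component `P` has the type represented by direction `d`. -/
def CompHasType (P : Set (ℤ × ℤ)) (d : ℤ × ℤ) : Prop :=
  ∃ a b, P = {a, b} ∧ (b - a = d ∨ b - a = -d)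

/-- The graph distance between the components `P` and `Q` equals 3. -/
def CompDistEqThree (P Q : Set (ℤ × ℤ)) : Prop :=
  (∀ a ∈ P, ∀ b ∈ Q, 3 ≤ triLattice.dist a b) ∧
  (∃ a ∈ P, ∃ b ∈ Q, triLattice.dist a b = 3)

/-- `S` has three components, pairwise at distance exactly 3, of types 1, 2 and 3
(in some order). -/
def HasRainbowTriple (S : Set (ℤ × ℤ)) : Prop :=
  ∃ P Q R : Set (ℤ × ℤ),
    IsComp S P ∧ IsComp S Q ∧ IsComp S R ∧
    CompDistEqThree P Q ∧ CompDistEqThree P R ∧ CompDistEqThree Q R ∧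
    CompHasType P (0,1) ∧ CompHasType Q (1,0) ∧ CompHasType R (1,-1)


def F1 : Finset (ZMod 5 × ZMod 35) := {(4,1), (1,2), (3,2), (0,3), (2,4), (2,5), (3,6), (4,6), (0,8), (2,9), (4,9), (1,10), (3,11), (3,12), (0,13), (4,13), (1,15), (0,16), (3,16), (2,17), (4,18), (4,19), (0,20), (1,20), (2,22), (1,23), (4,23), (3,24), (0,25), (0,26), (1,27), (2,27), (3,29), (0,30), (2,30), (4,31), (1,32), (1,33), (2,34), (3,34)}

def F2 : Finset (ZMod 6 × ZMod 12) := {(5,1), (1,2), (2,2), (5,2), (2,4), (1,5), (4,5), (5,5), (2,7), (2,8), (4,8), (5,8), (2,11), (4,11), (5,10), (1,11)}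

set_option maxHeartbeats 4000000 in
set_option maxRecDepth 100000 in
lemma F1ok : ∀ r : ZMod 5 × ZMod 35,
    (r ∈ F1 → pcount F1 r = 1) ∧ (r ∉ F1 → pcount F1 r = 1 ∨ pcount F1 r = 2) := by decide

set_option maxHeartbeats 4000000 in
set_option maxRecDepth 100000 in
lemma F2ok : ∀ r : ZMod 6 × ZMod 12,
    (r ∈ F2 → pcount F2 r = 1) ∧ (r ∉ F2 → pcount F2 r = 1 ∨ pcount F2 r = 2) := by decide

lemma rainbow1 : HasRainbowTriple (pset F1) := by
  refine ⟨{(7,4), (7,5)}, {(3,6), (4,6)}, {(6,2), (5,3)}, ?_, ?_, ?_, ?_, ?_, ?_, ?_, ?_, ?_⟩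
  · exact ⟨(7,4), (7,5), by decide, by decide, by rw [adj_iff]; decide, rfl⟩
  · exact ⟨(3,6), (4,6), by decide, by decide, by rw [adj_iff]; decide, rfl⟩
  · exact ⟨(6,2), (5,3), by decide, by decide, by rw [adj_iff]; decide, rfl⟩
  · constructor
    · intro a ha b hb
      simp only [Set.mem_insert_iff, Set.mem_singleton_iff] at ha hb
      rcases ha with rfl | rfl <;> rcases hb with rfl | rfl <;>
        exact three_le_dist (by decide)
    · exact ⟨(7,4), Set.mem_insert _ _, (4,6), Set.mem_insert_of_mem _ rfl,
        dist_eq_three (-1,0) (-1,1) (-1,1) (by decide) (by decide) (by decide) (by decide) (by decide)⟩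
  · constructor
    · intro a ha b hb
      simp only [Set.mem_insert_iff, Set.mem_singleton_iff] at ha hb
      rcases ha with rfl | rfl <;> rcases hb with rfl | rfl <;>
        exact three_le_dist (by decide)
    · exact ⟨(7,4), Set.mem_insert _ _, (5,3), Set.mem_insert_of_mem _ rfl,
        dist_eq_three (-1,0) (-1,0) (0,-1) (by decide) (by decide) (by decide) (by decide) (by decide)⟩
  · constructor
    · intro a ha b hb
      simp only [Set.mem_insert_iff, Set.mem_singleton_iff] at ha hb
      rcases ha with rfl | rfl <;> rcases hb with rfl | rfl <;>
        exact three_le_dist (by decide)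
    · exact ⟨(3,6), Set.mem_insert _ _, (5,3), Set.mem_insert_of_mem _ rfl,
        dist_eq_three (1,-1) (1,-1) (0,-1) (by decide) (by decide) (by decide) (by decide) (by decide)⟩
  · exact ⟨(7,4), (7,5), rfl, by decide⟩
  · exact ⟨(3,6), (4,6), rfl, by decide⟩
  · exact ⟨(6,2), (5,3), rfl, by decide⟩

lemma rainbow2 : HasRainbowTriple (pset F2) := by
  refine ⟨{(8,7), (8,8)}, {(4,8), (5,8)}, {(8,4), (7,5)}, ?_, ?_, ?_, ?_, ?_, ?_, ?_, ?_, ?_⟩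
  · exact ⟨(8,7), (8,8), by decide, by decide, by rw [adj_iff]; decide, rfl⟩
  · exact ⟨(4,8), (5,8), by decide, by decide, by rw [adj_iff]; decide, rfl⟩
  · exact ⟨(8,4), (7,5), by decide, by decide, by rw [adj_iff]; decide, rfl⟩
  · constructor
    · intro a ha b hb
      simp only [Set.mem_insert_iff, Set.mem_singleton_iff] at ha hb
      rcases ha with rfl | rfl <;> rcases hb with rfl | rfl <;>
        exact three_le_dist (by decide)
    · exact ⟨(8,7), Set.mem_insert _ _, (5,8), Set.mem_insert_of_mem _ rfl,
        dist_eq_three (-1,0) (-1,0) (-1,1) (by decide) (by decide) (by decide) (by decide) (by decide)⟩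
  · constructor
    · intro a ha b hb
      simp only [Set.mem_insert_iff, Set.mem_singleton_iff] at ha hb
      rcases ha with rfl | rfl <;> rcases hb with rfl | rfl <;>
        exact three_le_dist (by decide)
    · exact ⟨(8,7), Set.mem_insert _ _, (7,5), Set.mem_insert_of_mem _ rfl,
        dist_eq_three (0,-1) (0,-1) (-1,0) (by decide) (by decide) (by decide) (by decide) (by decide)⟩
  · constructor
    · intro a ha b hb
      simp only [Set.mem_insert_iff, Set.mem_singleton_iff] at ha hb
      rcases ha with rfl | rfl <;> rcases hb with rfl | rfl <;>
        exact three_le_dist (by decide)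
    · exact ⟨(4,8), Set.mem_insert _ _, (7,5), Set.mem_insert_of_mem _ rfl,
        dist_eq_three (1,-1) (1,-1) (1,-1) (by decide) (by decide) (by decide) (by decide) (by decide)⟩
  · exact ⟨(8,7), (8,8), rfl, by decide⟩
  · exact ⟨(4,8), (5,8), rfl, by decide⟩
  · exact ⟨(8,4), (7,5), rfl, by decide⟩

def DiagF : Finset (ℤ × ℤ) := {(1,1), (-1,-1), (2,-1), (-2,1), (1,-2), (-1,2)}

lemma key_comb : ∀ e1 ∈ DF, ∀ f1 ∈ DF, ∀ e2 ∈ DF, ∀ f2 ∈ DF,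
    e1 + f1 = e2 + f2 → e1 ≠ e2 → e1 + f1 ∉ DF → e1 + f1 ≠ 0 → e1 + f1 ∈ DiagF := by decide

def DiagFZ : Finset (ZMod 6 × ZMod 12) := {(1,1), (5,11), (2,11), (4,1), (1,10), (5,2)}

lemma diag_map : ∀ d ∈ DiagF, pmap 6 12 d ∈ DiagFZ := by decide

set_option maxRecDepth 10000 in
lemma no_diag : ∀ r ∈ F2, ∀ d ∈ DiagFZ, r + d ∉ F2 := by decide

/-- Up to symmetry, there are at least two `K₂`-QPDSs in the triangular lattice
with three pairwise adjacent components of the three different types. -/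
theorem two_K2_QPDSs_with_rainbow_triples :
    ∃ S S' : Set (ℤ × ℤ),
      IsK2QPDS triLattice S ∧ IsK2QPDS triLattice S' ∧
      HasRainbowTriple S ∧ HasRainbowTriple S' ∧
      ¬ ∃ φ : triLattice ≃g triLattice, ⇑φ '' S = S' := by
  refine ⟨pset F1, pset F2, pset_K2QPDS F1 F1ok, pset_K2QPDS F2 F2ok,
    rainbow1, rainbow2, ?_⟩
  rintro ⟨φ, hφ⟩
  have ha : ((3,2) : ℤ × ℤ) ∈ pset F1 := by decide
  have hb : ((2,4) : ℤ × ℤ) ∈ pset F1 := by decide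
  have haw1 : triLattice.Adj (3,2) (2,3) := by rw [adj_iff]; decide
  have hw1b : triLattice.Adj (2,3) (2,4) := by rw [adj_iff]; decide
  have haw2 : triLattice.Adj (3,2) (3,3) := by rw [adj_iff]; decide
  have hw2b : triLattice.Adj (3,3) (2,4) := by rw [adj_iff]; decide
  have hnadj : ¬ triLattice.Adj (3,2) (2,4) := by rw [adj_iff]; decide
  have hne : ((3,2) : ℤ × ℤ) ≠ (2,4) := by decide
  have hw12 : ((2,3) : ℤ × ℤ) ≠ (3,3) := by decide
  set a' := φ (3,2)
  set b' := φ (2,4)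
  set w1' := φ (2,3)
  set w2' := φ (3,3)
  have ha' : a' ∈ pset F2 := by rw [← hφ]; exact Set.mem_image_of_mem _ ha
  have hb' : b' ∈ pset F2 := by rw [← hφ]; exact Set.mem_image_of_mem _ hb
  have h1 : triLattice.Adj a' w1' := φ.map_adj_iff.mpr haw1
  have h2 : triLattice.Adj w1' b' := φ.map_adj_iff.mpr hw1b
  have h3 : triLattice.Adj a' w2' := φ.map_adj_iff.mpr haw2
  have h4 : triLattice.Adj w2' b' := φ.map_adj_iff.mpr hw2b
  have he1 : w1' - a' ∈ DF := adj_iff.mp h1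
  have hf1 : b' - w1' ∈ DF := adj_iff.mp h2
  have he2 : w2' - a' ∈ DF := adj_iff.mp h3
  have hf2 : b' - w2' ∈ DF := adj_iff.mp h4
  have hnadj' : ¬ triLattice.Adj a' b' := fun h => hnadj (φ.map_adj_iff.mp h)
  have hne' : a' ≠ b' := fun h => hne (φ.toEquiv.injective h)
  have hw12' : w1' ≠ w2' := fun h => hw12 (φ.toEquiv.injective h)
  have hrw : (w1' - a') + (b' - w1') = b' - a' := by ring
  have hkey : b' - a' ∈ DiagF := by
    have hk := key_comb _ he1 _ hf1 _ he2 _ hf2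
      (by ring) (fun h => hw12' (sub_left_inj.mp h))
      (by rw [hrw]; exact fun h => hnadj' (adj_iff.mpr h))
      (by rw [hrw]; exact sub_ne_zero.mpr fun h => hne' h.symm)
    rwa [hrw] at hk
  have hfin : pmap 6 12 a' + pmap 6 12 (b' - a') ∉ F2 := no_diag _ ha' _ (diag_map _ hkey)
  apply hfin
  rw [← pmap_add]
  have hab : a' + (b' - a') = b' := by ring
  rw [hab]
  exact hb'
end

section
/- The collection of all K₂-quasiperfect dominating sets of the triangular lattice Δ, i.e. the set {S ⊆ ℤ × ℤ : S is a K₂-QPDS of Δ}, has the cardinality of the continuum (cardinality 2^ℵ₀). -/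
open SimpleGraph Set

lemma adj_iff_s19 {x y a b : ℤ} : triLattice.Adj (x,y) (a,b) ↔
    (x - a = 1 ∧ y - b = 0) ∨ (x - a = -1 ∧ y - b = 0) ∨ (x - a = 0 ∧ y - b = 1) ∨
    (x - a = 0 ∧ y - b = -1) ∨ (x - a = 1 ∧ y - b = -1) ∨ (x - a = -1 ∧ y - b = 1) := by
  simp only [triLattice, SimpleGraph.fromRel_adj, triDirs, Prod.mk_sub_mk,
    Set.mem_insert_iff, Set.mem_singleton_iff, Prod.mk.injEq, ne_eq]
  omega

/-- rows `y ≡ 0 (mod 3)`, dominoes at `x ≡ f (y/3), f (y/3) + 1 (mod 3)`. -/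
def Sf (f : ℤ → ℤ) : Set (ℤ × ℤ) :=
  {v | v.2 % 3 = 0 ∧ (v.1 - f (v.2 / 3)) % 3 ≠ 2}

lemma case_y0_r0 (f : ℤ → ℤ) (x y : ℤ) (hy : y % 3 = 0)
    (hr : (x - f (y / 3)) % 3 = 0) :
    {u | u ∈ Sf f ∧ triLattice.Adj (x,y) u} = {(x+1, y)} := by
  ext ⟨a,b⟩
  simp only [Set.mem_setOf_eq, Sf, adj_iff_s19, Set.mem_singleton_iff, Prod.mk.injEq]
  constructor
  · rintro ⟨⟨hb, hm⟩, hadj⟩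
    have hb' : b = y := by omega
    subst hb'
    set s := f (b / 3) with hs
    omega
  · rintro ⟨ha, hb⟩
    subst ha; subst hb
    set s := f (b / 3) with hs
    refine ⟨⟨by omega, by omega⟩, by omega⟩

lemma case_y0_r1 (f : ℤ → ℤ) (x y : ℤ) (hy : y % 3 = 0)
    (hr : (x - f (y / 3)) % 3 = 1) :
    {u | u ∈ Sf f ∧ triLattice.Adj (x,y) u} = {(x-1, y)} := by
  ext ⟨a,b⟩
  simp only [Set.mem_setOf_eq, Sf, adj_iff_s19, Set.mem_singleton_iff, Prod.mk.injEq]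
  constructor
  · rintro ⟨⟨hb, hm⟩, hadj⟩
    have hb' : b = y := by omega
    subst hb'
    set s := f (b / 3) with hs
    omega
  · rintro ⟨ha, hb⟩
    subst ha; subst hb
    set s := f (b / 3) with hs
    refine ⟨⟨by omega, by omega⟩, by omega⟩

lemma case_y0_r2 (f : ℤ → ℤ) (x y : ℤ) (hy : y % 3 = 0)
    (hr : (x - f (y / 3)) % 3 = 2) :
    {u | u ∈ Sf f ∧ triLattice.Adj (x,y) u} = {(x-1, y), (x+1, y)} := by
  ext ⟨a,b⟩
  simp only [Set.mem_setOf_eq, Sf, adj_iff_s19, Set.mem_insert_iff, Set.mem_singleton_iff,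
    Prod.mk.injEq]
  constructor
  · rintro ⟨⟨hb, hm⟩, hadj⟩
    have hb' : b = y := by omega
    subst hb'
    set s := f (b / 3) with hs
    omega
  · rintro (⟨ha, hb⟩ | ⟨ha, hb⟩) <;> subst ha <;> subst hb <;>
      set s := f (b / 3) with hs <;>
      exact ⟨⟨by omega, by omega⟩, by omega⟩

lemma case_y1_r0 (f : ℤ → ℤ) (x y : ℤ) (hy : y % 3 = 1)
    (hr : (x - f ((y-1) / 3)) % 3 = 0) :
    {u | u ∈ Sf f ∧ triLattice.Adj (x,y) u} = {(x, y-1), (x+1, y-1)} := by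
  ext ⟨a,b⟩
  simp only [Set.mem_setOf_eq, Sf, adj_iff_s19, Set.mem_insert_iff, Set.mem_singleton_iff,
    Prod.mk.injEq]
  constructor
  · rintro ⟨⟨hb, hm⟩, hadj⟩
    have hb' : b = y - 1 := by omega
    subst hb'
    set s := f ((y-1) / 3) with hs
    omega
  · rintro (⟨ha, hb⟩ | ⟨ha, hb⟩) <;> subst ha <;> subst hb <;>
      set s := f ((y-1) / 3) with hs <;>
      exact ⟨⟨by omega, by omega⟩, by omega⟩

lemma case_y1_r1 (f : ℤ → ℤ) (x y : ℤ) (hy : y % 3 = 1)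
    (hr : (x - f ((y-1) / 3)) % 3 = 1) :
    {u | u ∈ Sf f ∧ triLattice.Adj (x,y) u} = {(x, y-1)} := by
  ext ⟨a,b⟩
  simp only [Set.mem_setOf_eq, Sf, adj_iff_s19, Set.mem_singleton_iff, Prod.mk.injEq]
  constructor
  · rintro ⟨⟨hb, hm⟩, hadj⟩
    have hb' : b = y - 1 := by omega
    subst hb'
    set s := f ((y-1) / 3) with hs
    omega
  · rintro ⟨ha, hb⟩
    subst ha; subst hb
    set s := f ((y-1) / 3) with hs
    refine ⟨⟨by omega, by omega⟩, by omega⟩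

lemma case_y1_r2 (f : ℤ → ℤ) (x y : ℤ) (hy : y % 3 = 1)
    (hr : (x - f ((y-1) / 3)) % 3 = 2) :
    {u | u ∈ Sf f ∧ triLattice.Adj (x,y) u} = {(x+1, y-1)} := by
  ext ⟨a,b⟩
  simp only [Set.mem_setOf_eq, Sf, adj_iff_s19, Set.mem_singleton_iff, Prod.mk.injEq]
  constructor
  · rintro ⟨⟨hb, hm⟩, hadj⟩
    have hb' : b = y - 1 := by omega
    subst hb'
    set s := f ((y-1) / 3) with hs
    omega
  · rintro ⟨ha, hb⟩
    subst ha; subst hb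
    set s := f ((y-1) / 3) with hs
    refine ⟨⟨by omega, by omega⟩, by omega⟩

lemma case_y2_r0 (f : ℤ → ℤ) (x y : ℤ) (hy : y % 3 = 2)
    (hr : (x - f ((y+1) / 3)) % 3 = 0) :
    {u | u ∈ Sf f ∧ triLattice.Adj (x,y) u} = {(x, y+1)} := by
  ext ⟨a,b⟩
  simp only [Set.mem_setOf_eq, Sf, adj_iff_s19, Set.mem_singleton_iff, Prod.mk.injEq]
  constructor
  · rintro ⟨⟨hb, hm⟩, hadj⟩
    have hb' : b = y + 1 := by omega
    subst hb'
    set s := f ((y+1) / 3) with hs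
    omega
  · rintro ⟨ha, hb⟩
    subst ha; subst hb
    set s := f ((y+1) / 3) with hs
    refine ⟨⟨by omega, by omega⟩, by omega⟩

lemma case_y2_r1 (f : ℤ → ℤ) (x y : ℤ) (hy : y % 3 = 2)
    (hr : (x - f ((y+1) / 3)) % 3 = 1) :
    {u | u ∈ Sf f ∧ triLattice.Adj (x,y) u} = {(x-1, y+1), (x, y+1)} := by
  ext ⟨a,b⟩
  simp only [Set.mem_setOf_eq, Sf, adj_iff_s19, Set.mem_insert_iff, Set.mem_singleton_iff,
    Prod.mk.injEq]
  constructor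
  · rintro ⟨⟨hb, hm⟩, hadj⟩
    have hb' : b = y + 1 := by omega
    subst hb'
    set s := f ((y+1) / 3) with hs
    omega
  · rintro (⟨ha, hb⟩ | ⟨ha, hb⟩) <;> subst ha <;> subst hb <;>
      set s := f ((y+1) / 3) with hs <;>
      exact ⟨⟨by omega, by omega⟩, by omega⟩

lemma case_y2_r2 (f : ℤ → ℤ) (x y : ℤ) (hy : y % 3 = 2)
    (hr : (x - f ((y+1) / 3)) % 3 = 2) :
    {u | u ∈ Sf f ∧ triLattice.Adj (x,y) u} = {(x-1, y+1)} := by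
  ext ⟨a,b⟩
  simp only [Set.mem_setOf_eq, Sf, adj_iff_s19, Set.mem_singleton_iff, Prod.mk.injEq]
  constructor
  · rintro ⟨⟨hb, hm⟩, hadj⟩
    have hb' : b = y + 1 := by omega
    subst hb'
    set s := f ((y+1) / 3) with hs
    omega
  · rintro ⟨ha, hb⟩
    subst ha; subst hb
    set s := f ((y+1) / 3) with hs
    refine ⟨⟨by omega, by omega⟩, by omega⟩

lemma pair_ne_horiz (x y : ℤ) : ((x-1, y) : ℤ × ℤ) ≠ (x+1, y) := by
  simp only [ne_eq, Prod.mk.injEq, not_and]; omega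

lemma key (f : ℤ → ℤ) : IsK2QPDS triLattice (Sf f) := by
  constructor
  · rintro ⟨x, y⟩ hv
    simp only [Sf, Set.mem_setOf_eq, not_and, ne_eq, not_not] at hv
    have h3 : y % 3 = 0 ∨ y % 3 = 1 ∨ y % 3 = 2 := by omega
    rcases h3 with h3 | h3 | h3
    · right
      rw [case_y0_r2 f x y h3 (hv h3)]
      exact Set.ncard_pair (pair_ne_horiz x y)
    · have hr : (x - f ((y-1)/3)) % 3 = 0 ∨ (x - f ((y-1)/3)) % 3 = 1 ∨
          (x - f ((y-1)/3)) % 3 = 2 := by omega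
      rcases hr with hr | hr | hr
      · right
        rw [case_y1_r0 f x y h3 hr]
        refine Set.ncard_pair ?_
        simp only [ne_eq, Prod.mk.injEq, not_and]; omega
      · left; rw [case_y1_r1 f x y h3 hr]; exact Set.ncard_singleton _
      · left; rw [case_y1_r2 f x y h3 hr]; exact Set.ncard_singleton _
    · have hr : (x - f ((y+1)/3)) % 3 = 0 ∨ (x - f ((y+1)/3)) % 3 = 1 ∨
          (x - f ((y+1)/3)) % 3 = 2 := by omega
      rcases hr with hr | hr | hr
      · left; rw [case_y2_r0 f x y h3 hr]; exact Set.ncard_singleton _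
      · right
        rw [case_y2_r1 f x y h3 hr]
        refine Set.ncard_pair ?_
        simp only [ne_eq, Prod.mk.injEq, not_and]; omega
      · left; rw [case_y2_r2 f x y h3 hr]; exact Set.ncard_singleton _
  · rintro ⟨x, y⟩ hv
    obtain ⟨hy, hm⟩ := hv
    simp only at hy hm
    have hr : (x - f (y/3)) % 3 = 0 ∨ (x - f (y/3)) % 3 = 1 := by omega
    rcases hr with hr | hr
    · rw [case_y0_r0 f x y hy hr]; exact Set.ncard_singleton _
    · rw [case_y0_r1 f x y hy hr]; exact Set.ncard_singleton _

lemma Sf_inj : Function.Injective (fun b : ℤ → Bool => Sf (fun j => if b j then 0 else 1)) := by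
  intro b b' h
  funext j
  by_contra hne
  have hmem : ∀ c : ℤ → Bool, ((0 : ℤ), 3 * j) ∈ Sf (fun i => if c i then 0 else 1) ↔ c j := by
    intro c
    simp only [Sf, Set.mem_setOf_eq, Int.mul_emod_right, Int.mul_ediv_cancel_left _ (by norm_num : (3:ℤ) ≠ 0)]
    cases hc : c j <;> simp [hc] <;> omega
  simp only at h
  have h2 : (((0 : ℤ), 3 * j) ∈ Sf (fun i => if b i then 0 else 1)) ↔
      (((0 : ℤ), 3 * j) ∈ Sf (fun i => if b' i then 0 else 1)) := by rw [h]
  rw [hmem b, hmem b'] at h2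
  cases hb : b j <;> cases hb' : b' j <;> simp_all


/-- The collection of all `K₂`-QPDSs of the triangular lattice has the cardinality
of the continuum. -/
theorem continuum_many_K2_QPDSs :
    Cardinal.mk {S : Set (ℤ × ℤ) | IsK2QPDS triLattice S} = Cardinal.continuum := by
  apply le_antisymm
  · calc Cardinal.mk {S : Set (ℤ × ℤ) | IsK2QPDS triLattice S}
        ≤ Cardinal.mk (Set (ℤ × ℤ)) := Cardinal.mk_subtype_le _
      _ = 2 ^ Cardinal.mk (ℤ × ℤ) := Cardinal.mk_set
      _ = 2 ^ Cardinal.aleph0 := by rw [Cardinal.mk_eq_aleph0]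
      _ = Cardinal.continuum := Cardinal.two_power_aleph0
  · have hinj : Function.Injective
        (fun b : ℤ → Bool =>
          (⟨Sf (fun j => if b j then 0 else 1), key _⟩ :
            {S : Set (ℤ × ℤ) | IsK2QPDS triLattice S})) := by
      intro b b' h
      exact Sf_inj (congrArg Subtype.val h)
    calc Cardinal.continuum = 2 ^ Cardinal.aleph0 := Cardinal.two_power_aleph0.symm
      _ = Cardinal.mk Bool ^ Cardinal.mk ℤ := by rw [Cardinal.mk_bool, Cardinal.mk_int]
      _ = Cardinal.mk (ℤ → Bool) := Cardinal.power_def _ _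
      _ ≤ _ := Cardinal.mk_le_of_injective hinj
end
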